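/- arXiv:1204.0637 — 6 statements merged into one kernel-verified Lean document; each statement's English description precedes it below -/
import Mathlib

section
/- Let X be a real random variable with E[X] = 0, E[X^2] > 0 and E[X^4] < ∞. Then E[X^4]/(E[X^2])^2 - (E[X^3])^2/(E[X^2])^3 ≥ 1 (Pearson's kurtosis-skewness inequality). -/
open MeasureTheory

/-- Pearson's kurtosis-skewness inequality. -/
theorem pearson_inequality {Ω : Type*} [MeasurableSpace Ω] (μ : Measure Ω)
    [IsProbabilityMeasure μ] (X : Ω → ℝ)
    (h1 : Integrable X μ) (h2 : Integrable (fun ω => X ω ^ 2) μ)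
    (h3 : Integrable (fun ω => X ω ^ 3) μ) (h4 : Integrable (fun ω => X ω ^ 4) μ)
    (hmean : ∫ ω, X ω ∂μ = 0) (hvar : 0 < ∫ ω, X ω ^ 2 ∂μ) :
    1 ≤ (∫ ω, X ω ^ 4 ∂μ) / (∫ ω, X ω ^ 2 ∂μ) ^ 2
      - (∫ ω, X ω ^ 3 ∂μ) ^ 2 / (∫ ω, X ω ^ 2 ∂μ) ^ 3 := by
  set m2 := ∫ ω, X ω ^ 2 ∂μ with hm2
  set m3 := ∫ ω, X ω ^ 3 ∂μ with hm3
  set m4 := ∫ ω, X ω ^ 4 ∂μ with hm4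
  have hne : m2 ≠ 0 := ne_of_gt hvar
  set a : ℝ := m3 / m2 with ha
  have h0 : 0 ≤ ∫ ω, (X ω ^ 2 - a * X ω - m2) ^ 2 ∂μ :=
    integral_nonneg fun ω => sq_nonneg _
  have heq : (fun ω => (X ω ^ 2 - a * X ω - m2) ^ 2)
      = fun ω => (X ω ^ 4 + (-(2*a)) * X ω ^ 3) + ((a^2 - 2*m2) * X ω ^ 2
          + ((2*a*m2) * X ω + m2^2)) := by
    funext ω; ring
  rw [heq] at h0
  have i3 : Integrable (fun ω => -(2*a) * X ω ^ 3) μ := h3.const_mul _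
  have i2 : Integrable (fun ω => (a^2 - 2*m2) * X ω ^ 2) μ := h2.const_mul _
  have i1 : Integrable (fun ω => (2*a*m2) * X ω) μ := h1.const_mul _
  have ic : Integrable (fun _ : Ω => m2 ^ 2) μ := integrable_const _
  have i1c : Integrable (fun ω => (2*a*m2) * X ω + m2^2) μ := i1.add ic
  have i21c : Integrable (fun ω => (a^2 - 2*m2) * X ω ^ 2 + ((2*a*m2) * X ω + m2^2)) μ := i2.add i1c
  have i43 : Integrable (fun ω => X ω ^ 4 + -(2*a) * X ω ^ 3) μ := h4.add i3
  rw [integral_add i43 i21c, integral_add h4 i3, integral_add i2 i1c,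
      integral_add i1 ic, integral_const_mul, integral_const_mul, integral_const_mul,
      integral_const, hmean] at h0
  simp only [measure_univ, probReal_univ, ENNReal.toReal_one, smul_eq_mul, one_mul, mul_zero,
    add_zero, zero_add] at h0
  -- h0 : 0 ≤ m4 + -(2*a) * m3 + ((a^2 - 2*m2) * m2 + m2^2)
  have key : m2 ^ 3 + m3 ^ 2 ≤ m4 * m2 := by
    have e1 : a * m3 = m3 ^ 2 / m2 := by rw [ha]; ring
    have e2 : a ^ 2 * m2 = m3 ^ 2 / m2 := by
      rw [ha]; field_simp
    have hd : m3 ^ 2 / m2 * m2 = m3 ^ 2 := div_mul_cancel₀ _ hne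
    nlinarith [mul_le_mul_of_nonneg_right h0 hvar.le, sq_nonneg m3]
  have goal_eq : m4 / m2 ^ 2 - m3 ^ 2 / m2 ^ 3 = (m4 * m2 - m3 ^ 2) / m2 ^ 3 := by
    field_simp
  rw [goal_eq, le_div_iff₀ (by positivity)]
  linarith
end

section
/- Let X be a real random variable with E[X] = 0, E[X^2] > 0, E[X^4] < ∞, whose support consists of exactly two points (a Bernoulli variable). Then E[X^4]/(E[X^2])^2 - (E[X^3])^2/(E[X^2])^3 = 1, i.e., equality holds in Pearson's inequality. -/
open MeasureTheory

/-- Equality in Pearson's inequality for a Bernoulli (two-point) random variable. -/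
theorem pearson_eq_of_bernoulli {Ω : Type*} [MeasurableSpace Ω] (μ : Measure Ω)
    [IsProbabilityMeasure μ] (X : Ω → ℝ)
    (h1 : Integrable X μ) (h2 : Integrable (fun ω => X ω ^ 2) μ)
    (h3 : Integrable (fun ω => X ω ^ 3) μ) (h4 : Integrable (fun ω => X ω ^ 4) μ)
    (hmean : ∫ ω, X ω ∂μ = 0) (hvar : 0 < ∫ ω, X ω ^ 2 ∂μ)
    (hbern : ∃ a b : ℝ, a ≠ b ∧ μ {ω | X ω = a} ≠ 0 ∧ μ {ω | X ω = b} ≠ 0 ∧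
      ∀ᵐ ω ∂μ, X ω = a ∨ X ω = b) :
    (∫ ω, X ω ^ 4 ∂μ) / (∫ ω, X ω ^ 2 ∂μ) ^ 2
      - (∫ ω, X ω ^ 3 ∂μ) ^ 2 / (∫ ω, X ω ^ 2 ∂μ) ^ 3 = 1 := by
  obtain ⟨a, b, hab, hA, hB, hae⟩ := hbern
  have e2 : ∀ᵐ ω ∂μ, X ω ^ 2 = (a + b) * X ω - a * b := by
    filter_upwards [hae] with ω h
    rcases h with h | h <;> rw [h] <;> ring
  have e3 : ∀ᵐ ω ∂μ, X ω ^ 3 = (a + b) * X ω ^ 2 - a * b * X ω := by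
    filter_upwards [hae] with ω h
    rcases h with h | h <;> rw [h] <;> ring
  have e4 : ∀ᵐ ω ∂μ, X ω ^ 4 = (a + b) * X ω ^ 3 - a * b * X ω ^ 2 := by
    filter_upwards [hae] with ω h
    rcases h with h | h <;> rw [h] <;> ring
  have i2 : ∫ ω, X ω ^ 2 ∂μ = -(a * b) := by
    rw [integral_congr_ae e2, integral_sub (h1.const_mul _) (integrable_const _),
      integral_const_mul, hmean, integral_const]
    simp
  have i3 : ∫ ω, X ω ^ 3 ∂μ = (a + b) * ∫ ω, X ω ^ 2 ∂μ := by
    rw [integral_congr_ae e3, integral_sub (h2.const_mul _) (h1.const_mul _),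
      integral_const_mul, integral_const_mul, hmean]
    ring
  have i4 : ∫ ω, X ω ^ 4 ∂μ = (a + b) * (∫ ω, X ω ^ 3 ∂μ) - a * b * ∫ ω, X ω ^ 2 ∂μ := by
    rw [integral_congr_ae e4, integral_sub (h3.const_mul _) (h2.const_mul _),
      integral_const_mul, integral_const_mul]
  set M := ∫ ω, X ω ^ 2 ∂μ with hM
  have hM0 : M ≠ 0 := ne_of_gt hvar
  have hab2 : a * b = -M := by linarith [i2]
  rw [i4, i3, hab2]
  field_simp
  ring
end

section
/- If equality holds in Pearson's inequality, i.e., E[X^4]/(E[X^2])^2 - (E[X^3])^2/(E[X^2])^3 = 1 for a random variable X with E[X]=0, E[X^2]>0, E[X^4]<∞, then X is supported on exactly two points. -/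
open MeasureTheory

/-- Equality in Pearson's inequality forces a two-point support. -/
theorem bernoulli_of_pearson_eq {Ω : Type*} [MeasurableSpace Ω] (μ : Measure Ω)
    [IsProbabilityMeasure μ] (X : Ω → ℝ)
    (h1 : Integrable X μ) (h2 : Integrable (fun ω => X ω ^ 2) μ)
    (h3 : Integrable (fun ω => X ω ^ 3) μ) (h4 : Integrable (fun ω => X ω ^ 4) μ)
    (hmean : ∫ ω, X ω ∂μ = 0) (hvar : 0 < ∫ ω, X ω ^ 2 ∂μ)
    (heq : (∫ ω, X ω ^ 4 ∂μ) / (∫ ω, X ω ^ 2 ∂μ) ^ 2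
      - (∫ ω, X ω ^ 3 ∂μ) ^ 2 / (∫ ω, X ω ^ 2 ∂μ) ^ 3 = 1) :
    ∃ a b : ℝ, a ≠ b ∧ μ {ω | X ω = a} ≠ 0 ∧ μ {ω | X ω = b} ≠ 0 ∧
      ∀ᵐ ω ∂μ, X ω = a ∨ X ω = b := by
  set m2 := ∫ ω, X ω ^ 2 ∂μ with hm2
  set m3 := ∫ ω, X ω ^ 3 ∂μ with hm3
  set m4 := ∫ ω, X ω ^ 4 ∂μ with hm4
  set c : ℝ := m3 / m2 with hc
  have hm2ne : m2 ≠ 0 := ne_of_gt hvar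
  -- key identity: m4 - m3^2/m2 - m2^2 = 0
  have hkey : m4 - c ^ 2 * m2 - m2 ^ 2 = 0 := by
    have : m4 / m2 ^ 2 - m3 ^ 2 / m2 ^ 3 = 1 := heq
    field_simp [hc]
    field_simp at this
    rw [hc]; field_simp; nlinarith [this]
  -- the function Y = X^2 - cX - m2 expanded
  have hexp : ∀ ω : Ω, (X ω ^ 2 - c * X ω - m2) ^ 2
      = X ω ^ 4 + (-2 * c) * X ω ^ 3 + (c ^ 2 - 2 * m2) * X ω ^ 2
        + (2 * c * m2) * X ω + m2 ^ 2 := by intro ω; ring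
  have hint : Integrable (fun ω => (X ω ^ 2 - c * X ω - m2) ^ 2) μ := by
    have : (fun ω => (X ω ^ 2 - c * X ω - m2) ^ 2)
        = fun ω => X ω ^ 4 + (-2 * c) * X ω ^ 3 + (c ^ 2 - 2 * m2) * X ω ^ 2
          + (2 * c * m2) * X ω + m2 ^ 2 := funext hexp
    rw [this]
    exact ((((h4.add (h3.const_mul _)).add (h2.const_mul _)).add
      (h1.const_mul _)).add (integrable_const _))
  have hival : ∫ ω, (X ω ^ 2 - c * X ω - m2) ^ 2 ∂μ = 0 := by
    have h5 : ∫ ω, (X ω ^ 2 - c * X ω - m2) ^ 2 ∂μ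
        = ∫ ω, (X ω ^ 4 + (-2 * c) * X ω ^ 3 + (c ^ 2 - 2 * m2) * X ω ^ 2
          + (2 * c * m2) * X ω + m2 ^ 2) ∂μ := by
      congr 1; exact funext hexp
    rw [h5]
    have s1 : ∫ ω, (X ω ^ 4 + (-2 * c) * X ω ^ 3 + (c ^ 2 - 2 * m2) * X ω ^ 2
          + (2 * c * m2) * X ω + m2 ^ 2) ∂μ
        = (∫ ω, (X ω ^ 4 + (-2 * c) * X ω ^ 3 + (c ^ 2 - 2 * m2) * X ω ^ 2
          + (2 * c * m2) * X ω) ∂μ) + ∫ _, m2 ^ 2 ∂μ :=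
      integral_add (((h4.add (h3.const_mul _)).add (h2.const_mul _)).add
        (h1.const_mul _)) (integrable_const _)
    have s2 : ∫ ω, (X ω ^ 4 + (-2 * c) * X ω ^ 3 + (c ^ 2 - 2 * m2) * X ω ^ 2
          + (2 * c * m2) * X ω) ∂μ
        = (∫ ω, (X ω ^ 4 + (-2 * c) * X ω ^ 3 + (c ^ 2 - 2 * m2) * X ω ^ 2) ∂μ)
          + ∫ ω, (2 * c * m2) * X ω ∂μ :=
      integral_add ((h4.add (h3.const_mul _)).add (h2.const_mul _)) (h1.const_mul _)
    have s3 : ∫ ω, (X ω ^ 4 + (-2 * c) * X ω ^ 3 + (c ^ 2 - 2 * m2) * X ω ^ 2) ∂μ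
        = (∫ ω, (X ω ^ 4 + (-2 * c) * X ω ^ 3) ∂μ)
          + ∫ ω, (c ^ 2 - 2 * m2) * X ω ^ 2 ∂μ :=
      integral_add (h4.add (h3.const_mul _)) (h2.const_mul _)
    have s4 : ∫ ω, (X ω ^ 4 + (-2 * c) * X ω ^ 3) ∂μ
        = (∫ ω, X ω ^ 4 ∂μ) + ∫ ω, (-2 * c) * X ω ^ 3 ∂μ :=
      integral_add h4 (h3.const_mul _)
    rw [s1, s2, s3, s4, integral_const_mul, integral_const_mul, integral_const_mul,
      integral_const]
    simp only [probReal_univ, ENNReal.toReal_one, smul_eq_mul, one_mul]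
    rw [hmean, ← hm2, ← hm3, ← hm4]
    have : (2 : ℝ) * c * m3 = 2 * c ^ 2 * m2 := by
      rw [hc]; field_simp
    nlinarith [hkey, this]
  have hae0 : ∀ᵐ ω ∂μ, X ω ^ 2 - c * X ω - m2 = 0 := by
    have := (integral_eq_zero_iff_of_nonneg
      (fun ω => sq_nonneg (X ω ^ 2 - c * X ω - m2)) hint).mp hival
    filter_upwards [this] with ω hω
    exact pow_eq_zero_iff (by norm_num) |>.mp hω
  -- roots
  set d : ℝ := Real.sqrt (c ^ 2 + 4 * m2) with hd
  have hdisc : (0 : ℝ) < c ^ 2 + 4 * m2 := by nlinarith [sq_nonneg c]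
  have hdpos : 0 < d := Real.sqrt_pos.mpr hdisc
  have hd2 : d ^ 2 = c ^ 2 + 4 * m2 := Real.sq_sqrt hdisc.le
  set a : ℝ := (c + d) / 2 with ha
  set b : ℝ := (c - d) / 2 with hb
  have hab : a ≠ b := by
    simp only [ha, hb]; intro h
    have hd0 : d = 0 := by
      have h2 : c + d = c - d := by
        field_simp at h; linarith
      linarith
    exact hdpos.ne' hd0
  have hfact : ∀ t : ℝ, t ^ 2 - c * t - m2 = (t - a) * (t - b) := by
    intro t
    have : a * b = -m2 := by
      simp only [ha, hb]
      linear_combination (-(1/4 : ℝ)) * hd2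
    have hsum : a + b = c := by simp only [ha, hb]; ring
    linear_combination (-t) * hsum - this
  have haeor : ∀ᵐ ω ∂μ, X ω = a ∨ X ω = b := by
    filter_upwards [hae0] with ω hω
    have := hfact (X ω) ▸ hω
    rcases mul_eq_zero.mp this with h | h
    · exact Or.inl (sub_eq_zero.mp h)
    · exact Or.inr (sub_eq_zero.mp h)
  -- now atoms are nonzero
  have habm : a * b = -m2 := by
    simp only [ha, hb]; linear_combination (-(1/4 : ℝ)) * hd2
  have key : ∀ u v : ℝ, u * v = -m2 → (∀ᵐ ω ∂μ, X ω = u ∨ X ω = v) →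
      μ {ω | X ω = u} = 0 → False := by
    intro u v huv hor hu
    have hnu : ∀ᵐ ω ∂μ, X ω ≠ u := by
      rw [ae_iff]; simpa using hu
    have hXv : ∀ᵐ ω ∂μ, X ω = v := by
      filter_upwards [hor, hnu] with ω h1 h2
      tauto
    have hv0 : v = 0 := by
      have : ∫ ω, X ω ∂μ = ∫ _, v ∂μ := integral_congr_ae hXv
      rw [hmean, integral_const] at this
      simpa using this.symm
    rw [hv0, mul_zero] at huv
    have : m2 = 0 := by linarith
    exact hm2ne this
  refine ⟨a, b, hab, ?_, ?_, haeor⟩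
  · intro h; exact key a b habm haeor h
  · intro h
    exact key b a (by linarith [habm, mul_comm a b]) (haeor.mono fun ω h => h.symm) h
end

section
/- Let β ∈ [0,2) and α ∈ (0,1]. For any real random variable X with E[X]=0, E[X^2]>0 and E[X^4]<∞, the strict inequality (E[|X|^β])^{2/(2-β)}/(E[X^2])^{β/(2-β)} · { E[X^4]/(E[X^2])^2 - α·(E[X^3])^2/(E[X^2])^3 } > 1 - α holds. -/
open MeasureTheory

theorem kurtosis_skewness_strict {Ω : Type*} [MeasurableSpace Ω] (μ : Measure Ω)
    [IsProbabilityMeasure μ] (X : Ω → ℝ) (α β : ℝ)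
    (hβ : β ∈ Set.Ico (0:ℝ) 2) (hα : α ∈ Set.Ioc (0:ℝ) 1)
    (h1 : Integrable X μ) (h2 : Integrable (fun ω => X ω ^ 2) μ)
    (h3 : Integrable (fun ω => X ω ^ 3) μ) (h4 : Integrable (fun ω => X ω ^ 4) μ)
    (hβint : Integrable (fun ω => |X ω| ^ β) μ)
    (hmean : ∫ ω, X ω ∂μ = 0) (hvar : 0 < ∫ ω, X ω ^ 2 ∂μ) :
    1 - α < (∫ ω, |X ω| ^ β ∂μ) ^ (2 / (2 - β)) / (∫ ω, X ω ^ 2 ∂μ) ^ (β / (2 - β))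
      * ((∫ ω, X ω ^ 4 ∂μ) / (∫ ω, X ω ^ 2 ∂μ) ^ 2
        - α * (∫ ω, X ω ^ 3 ∂μ) ^ 2 / (∫ ω, X ω ^ 2 ∂μ) ^ 3) := by
  obtain ⟨hβ0, hβ2⟩ := hβ
  obtain ⟨hα0, hα1⟩ := hα
  set A := ∫ ω, |X ω| ^ β ∂μ with hA_def
  set B := ∫ ω, X ω ^ 2 ∂μ with hB_def
  set C := ∫ ω, X ω ^ 3 ∂μ with hC_def
  set D := ∫ ω, X ω ^ 4 ∂μ with hD_def
  have hB : 0 < B := hvar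
  have hBne : B ≠ 0 := ne_of_gt hB
  -- Step 1: key moment inequality  C^2 ≤ (D - B^2) * B
  have key : C ^ 2 ≤ (D - B ^ 2) * B := by
    have hnn : 0 ≤ ∫ ω, (B * X ω ^ 2 - C * X ω - B ^ 2) ^ 2 ∂μ :=
      integral_nonneg fun ω => sq_nonneg _
    have i2 : Integrable (fun ω => (C ^ 2 - 2 * B ^ 3) * X ω ^ 2) μ := h2.const_mul _
    have i3 : Integrable (fun ω => (-(2 * B * C)) * X ω ^ 3) μ := h3.const_mul _
    have i1 : Integrable (fun ω => (2 * C * B ^ 2) * X ω) μ := h1.const_mul _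
    have i4 : Integrable (fun ω => B ^ 2 * X ω ^ 4) μ := h4.const_mul _
    have i42 : Integrable (fun ω => B ^ 2 * X ω ^ 4 + (C ^ 2 - 2 * B ^ 3) * X ω ^ 2) μ :=
      i4.add i2
    have i423 : Integrable
        (fun ω => B ^ 2 * X ω ^ 4 + (C ^ 2 - 2 * B ^ 3) * X ω ^ 2
          + (-(2 * B * C)) * X ω ^ 3) μ := i42.add i3
    have i4231 : Integrable
        (fun ω => B ^ 2 * X ω ^ 4 + (C ^ 2 - 2 * B ^ 3) * X ω ^ 2
          + (-(2 * B * C)) * X ω ^ 3 + (2 * C * B ^ 2) * X ω) μ := i423.add i1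
    have hint : ∫ ω, (B * X ω ^ 2 - C * X ω - B ^ 2) ^ 2 ∂μ
        = B ^ 2 * D + (C ^ 2 - 2 * B ^ 3) * B + (-(2 * B * C)) * C
          + (2 * C * B ^ 2) * (∫ ω, X ω ∂μ) + B ^ 4 := by
      have hexp : (fun ω => (B * X ω ^ 2 - C * X ω - B ^ 2) ^ 2)
          = fun ω => B ^ 2 * X ω ^ 4 + (C ^ 2 - 2 * B ^ 3) * X ω ^ 2
              + (-(2 * B * C)) * X ω ^ 3 + (2 * C * B ^ 2) * X ω + (B ^ 2) ^ 2 := by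
        funext ω; ring
      rw [hexp, integral_add i4231 (integrable_const _), integral_add i423 i1,
        integral_add i42 i3, integral_add i4 i2, integral_const_mul, integral_const_mul,
        integral_const_mul, integral_const_mul, integral_const]
      simp only [measure_univ, probReal_univ, ENNReal.toReal_one, smul_eq_mul, one_mul, ← hB_def, ← hC_def,
        ← hD_def]
      ring
    rw [hint, hmean] at hnn
    nlinarith [hnn, hB]
  -- nonnegativity / positivity
  have hA0 : 0 ≤ A := integral_nonneg fun ω => Real.rpow_nonneg (abs_nonneg _) β
  have hD : 0 < D := by nlinarith [key, sq_nonneg C, hB, mul_pos hB hB]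
  have h2β : (0:ℝ) < 2 - β := by linarith
  have h4β : (0:ℝ) < 4 - β := by linarith
  set p := (4 - β) / 2 with hp_def
  set q := (4 - β) / (2 - β) with hq_def
  have hp1 : 1 < p := by
    rw [hp_def, lt_div_iff₀ (by norm_num : (0:ℝ) < 2)]; linarith
  have hp0 : 0 < p := lt_trans one_pos hp1
  have hq0 : 0 < q := div_pos h4β h2β
  have hpq : p.HolderConjugate q := by
    refine Real.holderConjugate_iff.mpr ⟨hp1, ?_⟩
    rw [hp_def, hq_def]
    field_simp
    ring
  -- Memℒp facts
  have hfmem : MemLp (fun ω => |X ω| ^ (β / p)) (ENNReal.ofReal p) μ := by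
    have h := (memLp_one_iff_integrable.mpr hβint).norm_rpow_div (ENNReal.ofReal p)⁻¹
    have he : (1 : ENNReal) / (ENNReal.ofReal p)⁻¹ = ENNReal.ofReal p := by
      rw [one_div, inv_inv]
    have htr : ((ENNReal.ofReal p)⁻¹).toReal = 1 / p := by
      rw [ENNReal.toReal_inv, ENNReal.toReal_ofReal hp0.le, one_div]
    rw [he, htr] at h
    have hfun : (fun x => ‖|X x| ^ β‖ ^ (1 / p)) = fun ω => |X ω| ^ (β / p) := by
      funext x
      rw [Real.norm_eq_abs, abs_of_nonneg (Real.rpow_nonneg (abs_nonneg _) _),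
        ← Real.rpow_mul (abs_nonneg _), mul_one_div]
    rwa [hfun] at h
  have hgmem : MemLp (fun ω => |X ω| ^ (4 / q)) (ENNReal.ofReal q) μ := by
    have h := (memLp_one_iff_integrable.mpr h4).norm_rpow_div (ENNReal.ofReal q)⁻¹
    have he : (1 : ENNReal) / (ENNReal.ofReal q)⁻¹ = ENNReal.ofReal q := by
      rw [one_div, inv_inv]
    have htr : ((ENNReal.ofReal q)⁻¹).toReal = 1 / q := by
      rw [ENNReal.toReal_inv, ENNReal.toReal_ofReal hq0.le, one_div]
    rw [he, htr] at h
    have hfun : (fun x => ‖X x ^ 4‖ ^ (1 / q)) = fun ω => |X ω| ^ (4 / q) := by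
      funext x
      rw [Real.norm_eq_abs, abs_pow]
      rw [show |X x| ^ 4 = |X x| ^ ((4:ℕ):ℝ) from (Real.rpow_natCast _ 4).symm]
      rw [← Real.rpow_mul (abs_nonneg _), mul_one_div]
      norm_num
    rwa [hfun] at h
  -- Hölder's inequality
  have hHold := integral_mul_le_Lp_mul_Lq_of_nonneg hpq
    (Filter.Eventually.of_forall fun ω => Real.rpow_nonneg (abs_nonneg _) _)
    (Filter.Eventually.of_forall fun ω => Real.rpow_nonneg (abs_nonneg _) _) hfmem hgmem
  have hsum : β / p + 4 / q = 2 := by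
    rw [hp_def, hq_def]; field_simp; ring
  have e1 : ∫ ω, |X ω| ^ (β / p) * |X ω| ^ (4 / q) ∂μ = B := by
    rw [hB_def]
    refine integral_congr_ae (Filter.Eventually.of_forall fun ω => ?_)
    dsimp only
    rw [← Real.rpow_add' (abs_nonneg _) (by rw [hsum]; norm_num), hsum]
    rw [show (2:ℝ) = ((2:ℕ):ℝ) by norm_num, Real.rpow_natCast, sq_abs]
  have e2 : ∫ ω, (|X ω| ^ (β / p)) ^ p ∂μ = A := by
    rw [hA_def]
    refine integral_congr_ae (Filter.Eventually.of_forall fun ω => ?_)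
    dsimp only
    rw [← Real.rpow_mul (abs_nonneg _), div_mul_cancel₀ _ (ne_of_gt hp0)]
  have e3 : ∫ ω, (|X ω| ^ (4 / q)) ^ q ∂μ = D := by
    rw [hD_def]
    refine integral_congr_ae (Filter.Eventually.of_forall fun ω => ?_)
    dsimp only
    rw [← Real.rpow_mul (abs_nonneg _), div_mul_cancel₀ _ (ne_of_gt hq0)]
    rw [show (4:ℝ) = ((4:ℕ):ℝ) by norm_num, Real.rpow_natCast, ← abs_pow,
      abs_of_nonneg (by positivity : (0:ℝ) ≤ X ω ^ 4)]
  rw [e1, e2, e3] at hHold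
  -- raise Hölder to the power q
  have hGkey : B ^ (β / (2 - β)) * B ^ 2 ≤ A ^ (2 / (2 - β)) * D := by
    have h := Real.rpow_le_rpow hB.le hHold hq0.le
    rw [Real.mul_rpow (Real.rpow_nonneg hA0 _) (Real.rpow_nonneg hD.le _),
      ← Real.rpow_mul hA0, ← Real.rpow_mul hD.le] at h
    have ea : 1 / p * q = 2 / (2 - β) := by
      rw [hp_def, hq_def]; field_simp
    have eb : 1 / q * q = 1 := by
      rw [one_div, inv_mul_cancel₀ (ne_of_gt hq0)]
    rw [ea, eb, Real.rpow_one] at h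
    have ec : B ^ q = B ^ (β / (2 - β)) * B ^ 2 := by
      have : q = β / (2 - β) + 2 := by rw [hq_def]; field_simp; ring
      rw [this, Real.rpow_add hB, show (2:ℝ) = ((2:ℕ):ℝ) by norm_num, Real.rpow_natCast]
    rwa [ec] at h
  clear_value A B C D
  clear hfmem hgmem hHold e1 e2 e3 hβint h1 h2 h3 h4 hmean hsum hA_def hB_def hC_def hD_def hp_def hq_def hpq hp1 hp0 hq0 hvar
  -- conclude
  have hG : 0 < B ^ (β / (2 - β)) := Real.rpow_pos_of_pos hB _
  have hFG : B ^ 2 / D ≤ A ^ (2 / (2 - β)) / B ^ (β / (2 - β)) := by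
    rw [div_le_div_iff₀ hD hG]
    nlinarith [hGkey]
  have hP0 : 0 ≤ D / B ^ 2 - α * C ^ 2 / B ^ 3 := by
    have h : α * C ^ 2 / B ^ 3 ≤ D / B ^ 2 := by
      rw [div_le_div_iff₀ (pow_pos hB 3) (pow_pos hB 2)]
      have ha : α * C ^ 2 ≤ C ^ 2 := by nlinarith [sq_nonneg C]
      have hb := mul_le_mul_of_nonneg_right ha (sq_nonneg B)
      have hc := mul_le_mul_of_nonneg_right key (sq_nonneg B)
      nlinarith [pow_pos hB 5, hb, hc]
    linarith
  calc 1 - α < B ^ 2 / D * (D / B ^ 2 - α * C ^ 2 / B ^ 3) := by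
        have expand : B ^ 2 / D * (D / B ^ 2 - α * C ^ 2 / B ^ 3) = 1 - α * C ^ 2 / (D * B) := by
          field_simp [hBne, hD.ne']
        rw [expand]
        have hlt : α * C ^ 2 / (D * B) < α := by
          rw [div_lt_iff₀ (mul_pos hD hB)]
          nlinarith [key, hB, hα0, pow_pos hB 3,
            mul_lt_mul_of_pos_left (show C ^ 2 < D * B from by nlinarith [key, pow_pos hB 3]) hα0]
        linarith
    _ ≤ A ^ (2 / (2 - β)) / B ^ (β / (2 - β)) * (D / B ^ 2 - α * C ^ 2 / B ^ 3) :=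
        mul_le_mul_of_nonneg_right hFG hP0
end

section
/- Let β ∈ [0,1) and define g(x) = cosh((β-1)x)·cosh(x)^{1-β}. Then g attains its global minimum at x = 0, i.e., g(x) ≥ g(0) = 1 for all x ∈ ℝ. Conversely, if β ∈ (1,2), then g attains its global maximum at x = 0, i.e., g(x) ≤ 1 for all x ∈ ℝ. -/
open Real

lemma hasDerivAt_h (t x : ℝ) :
    HasDerivAt (fun x => t * Real.log (Real.cosh x) - Real.log (Real.cosh (t * x)))
      (t * (Real.sinh x / Real.cosh x) - t * (Real.sinh (t * x) / Real.cosh (t * x))) x := by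
  have h1 : HasDerivAt (fun x => Real.log (Real.cosh x)) (Real.sinh x / Real.cosh x) x := by
    have := (Real.hasDerivAt_log (Real.cosh_pos x).ne').comp x (Real.hasDerivAt_cosh x)
    simpa [div_eq_mul_inv, mul_comm, Function.comp_def] using this
  have h2 : HasDerivAt (fun x => Real.log (Real.cosh (t * x)))
      (t * (Real.sinh (t * x) / Real.cosh (t * x))) x := by
    have hin : HasDerivAt (fun x : ℝ => t * x) t x := by
      simpa using (hasDerivAt_id x).const_mul t
    have hout : HasDerivAt (fun y => Real.log (Real.cosh y))
        (Real.sinh (t * x) / Real.cosh (t * x)) (t * x) := by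
      have := (Real.hasDerivAt_log (Real.cosh_pos (t*x)).ne').comp (t*x)
        (Real.hasDerivAt_cosh (t*x))
      simpa [div_eq_mul_inv, mul_comm, Function.comp_def] using this
    simpa [mul_comm, Function.comp_def] using hout.comp x hin
  simpa [Pi.sub_def] using (h1.const_mul t).sub h2

lemma key (t : ℝ) (ht0 : 0 ≤ t) (ht1 : t ≤ 1) (x : ℝ) :
    Real.cosh (t * x) ≤ Real.cosh x ^ t := by
  set h : ℝ → ℝ := fun x => t * Real.log (Real.cosh x) - Real.log (Real.cosh (t * x)) with hh
  have hmono : MonotoneOn h (Set.Ici (0:ℝ)) := by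
    apply monotoneOn_of_deriv_nonneg (convex_Ici 0)
      (fun y _ => ((hasDerivAt_h t y).continuousAt).continuousWithinAt)
      (fun y _ => ((hasDerivAt_h t y).differentiableAt).differentiableWithinAt)
    intro y hy
    rw [interior_Ici] at hy
    rw [(hasDerivAt_h t y).deriv]
    have hy0 : 0 ≤ y := le_of_lt hy
    have hle : Real.sinh (t * y) / Real.cosh (t * y) ≤ Real.sinh y / Real.cosh y := by
      rw [div_le_div_iff₀ (Real.cosh_pos _) (Real.cosh_pos _)]
      have : Real.sinh (t * y - y) ≤ 0 := by
        rw [Real.sinh_nonpos_iff]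
        nlinarith
      rw [Real.sinh_sub] at this
      linarith
    have := mul_le_mul_of_nonneg_left hle ht0
    linarith
  have habs : h 0 ≤ h |x| := hmono Set.self_mem_Ici (Set.mem_Ici.2 (abs_nonneg x)) (abs_nonneg x)
  have h0 : h 0 = 0 := by simp [hh]
  have hx : h |x| = h x := by
    simp only [hh]
    rw [Real.cosh_abs, ← Real.cosh_abs (t * x), abs_mul, abs_of_nonneg ht0]
  have key : Real.log (Real.cosh (t * x)) ≤ t * Real.log (Real.cosh x) := by
    have := habs; rw [h0, hx] at this; simp only [hh] at this; linarith
  have := Real.exp_le_exp.2 key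
  rwa [Real.exp_log (Real.cosh_pos _), ← Real.log_rpow (Real.cosh_pos x),
    Real.exp_log (Real.rpow_pos_of_pos (Real.cosh_pos x) t)] at this

theorem g_extremum (β : ℝ) :
    (fun x : ℝ => Real.cosh ((β - 1) * x) * Real.cosh x ^ (1 - β)) 0 = 1 ∧
    (β ∈ Set.Ico (0:ℝ) 1 →
      ∀ x : ℝ, 1 ≤ Real.cosh ((β - 1) * x) * Real.cosh x ^ (1 - β)) ∧
    (β ∈ Set.Ioo (1:ℝ) 2 →
      ∀ x : ℝ, Real.cosh ((β - 1) * x) * Real.cosh x ^ (1 - β) ≤ 1) := by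
  refine ⟨by simp, ?_, ?_⟩
  · rintro ⟨hb0, hb1⟩ x
    have h1 : (1:ℝ) ≤ Real.cosh ((β - 1) * x) := Real.one_le_cosh _
    have h2 : (1:ℝ) ≤ Real.cosh x ^ (1 - β) :=
      Real.one_le_rpow (Real.one_le_cosh x) (by linarith)
    nlinarith
  · rintro ⟨hb1, hb2⟩ x
    have hk : Real.cosh ((β - 1) * x) ≤ Real.cosh x ^ (β - 1) :=
      key (β - 1) (by linarith) (by linarith) x
    have hpos : (0:ℝ) < Real.cosh x ^ (β - 1) := Real.rpow_pos_of_pos (Real.cosh_pos x) _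
    have heq : Real.cosh x ^ (1 - β) = (Real.cosh x ^ (β - 1))⁻¹ := by
      rw [← Real.rpow_neg (Real.cosh_pos x).le]; ring_nf
    rw [heq]
    rw [mul_inv_le_iff₀ hpos, one_mul]
    exact hk
end

section
/- Let β ∈ [0,1) and let X be a two-point random variable with E[X]=0, E[X^2]>0, E[X^4]<∞ such that equality holds in the inequality E[X^4]/(E[X^2])^2 - (3/4)(E[X^3])^2/(E[X^2])^3 = (E[X^2])^{β/(2-β)}/(E[|X|^β])^{2/(2-β)}. Then E[X^3] = 0, i.e., X is symmetrically Bernoulli. -/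
open MeasureTheory

lemma am_gm_sqrt {x y : ℝ} (hx : 0 ≤ x) (hy : 0 ≤ y) : 2 * Real.sqrt (x*y) ≤ x + y := by
  rw [Real.sqrt_mul hx]
  nlinarith [sq_nonneg (Real.sqrt x - Real.sqrt y), Real.sq_sqrt hx, Real.sq_sqrt hy,
    Real.sqrt_nonneg x, Real.sqrt_nonneg y]

lemma key_lemma (β a c p q : ℝ) (hβ0 : 0 ≤ β) (hβ1 : β < 1) (ha : 0 < a) (hc : 0 < c)
    (hp : 0 < p) (hq : 0 < q) (hpq : p + q = 1) (hm : p * a = q * c)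
    (heq : (p*a^4 + q*c^4)/(p*a^2 + q*c^2)^2 - 3/4 * (p*a^3 - q*c^3)^2/(p*a^2+q*c^2)^3
       = (p*a^2+q*c^2) ^ (β/(2-β)) / (p*a^β + q*c^β) ^ (2/(2-β))) : a = c := by
  have hD : (0:ℝ) < 2 - β := by linarith
  have hT : (0:ℝ) < a + c := by linarith
  have hp' : p = c / (a+c) := by
    field_simp
    linear_combination c * hpq + hm
  have hq' : q = a / (a+c) := by
    field_simp
    linear_combination a * hpq - hm
  have haβ : (0:ℝ) < a ^ β := Real.rpow_pos_of_pos ha β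
  have hcβ : (0:ℝ) < c ^ β := Real.rpow_pos_of_pos hc β
  have hPpos : (0:ℝ) < a * c := mul_pos ha hc
  have hm2 : p*a^2 + q*c^2 = a*c := by rw [hp', hq']; field_simp
  have hmβ : p*a^β + q*c^β = (c*a^β + a*c^β)/(a+c) := by rw [hp', hq']; field_simp
  have hL : (p*a^4 + q*c^4)/(p*a^2 + q*c^2)^2 - 3/4 * (p*a^3 - q*c^3)^2/(p*a^2+q*c^2)^3
      = (a+c)^2/(4*(a*c)) := by
    rw [hp', hq']
    field_simp
    ring
  rw [hL, hm2, hmβ] at heq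
  set S := c*a^β + a*c^β with hSdef
  have hSpos : (0:ℝ) < S := by positivity
  have hlog := congrArg Real.log heq
  rw [Real.log_div (by positivity) (by positivity),
      Real.log_div (by positivity) (by positivity),
      Real.log_pow, Real.log_mul (by norm_num) (by positivity),
      Real.log_rpow hPpos, Real.log_rpow (by positivity),
      Real.log_div (by positivity) (by positivity)] at hlog
  have hlog4 : Real.log 4 = 2 * Real.log 2 := by
    rw [show (4:ℝ) = 2^2 by norm_num, Real.log_pow]; norm_num
  rw [hlog4] at hlog
  push_cast at hlog
  have hAM1 : 2 * Real.sqrt (a*c) ≤ a + c := am_gm_sqrt ha.le hc.le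
  have hx : Real.log 2 + Real.log (a*c) / 2 ≤ Real.log (a+c) := by
    have h1 : Real.log (2 * Real.sqrt (a*c)) ≤ Real.log (a+c) :=
      Real.log_le_log (by positivity) hAM1
    rw [Real.log_mul (by norm_num) (by positivity), Real.log_sqrt hPpos.le] at h1
    linarith
  have hprod : (c*a^β) * (a*c^β) = (a*c)^((1:ℝ)+β) := by
    rw [Real.rpow_add hPpos, Real.rpow_one, Real.mul_rpow ha.le hc.le]
    ring
  have hAM2 : 2 * (a*c)^(((1:ℝ)+β)/2) ≤ S := by
    have h1 := am_gm_sqrt (x := c*a^β) (y := a*c^β) (by positivity) (by positivity)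
    rw [hprod] at h1
    have h2 : Real.sqrt ((a*c)^((1:ℝ)+β)) = (a*c)^(((1:ℝ)+β)/2) := by
      rw [Real.sqrt_eq_rpow, ← Real.rpow_mul hPpos.le]
      ring_nf
    rw [h2] at h1
    exact h1
  have hy : Real.log 2 + (1+β)/2 * Real.log (a*c) ≤ Real.log S := by
    have h1 : Real.log (2 * (a*c)^(((1:ℝ)+β)/2)) ≤ Real.log S :=
      Real.log_le_log (by positivity) hAM2
    rw [Real.log_mul (by norm_num) (by positivity), Real.log_rpow hPpos] at h1
    linarith
  set LT := Real.log (a+c) with hLT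
  set LP := Real.log (a*c) with hLP
  set LS := Real.log S with hLS
  set L2 := Real.log 2 with hL2
  have h2 : (2*LT - (2*L2+LP))*(2-β) = β*LP - 2*(LS-LT) := by
    rw [hlog]
    field_simp
  have hXnn : 0 ≤ LT - L2 - LP/2 := by linarith
  have hYnn : 0 ≤ LS - L2 - (1+β)/2*LP := by linarith
  have hkey : (1-β) * (LT - L2 - LP/2) + (LS - L2 - (1+β)/2*LP) = 0 := by
    linear_combination (1/2) * h2
  have hXle : (1-β) * (LT - L2 - LP/2) ≤ 0 := by linarith
  have hXge : 0 ≤ (1-β) * (LT - L2 - LP/2) := mul_nonneg (by linarith) hXnn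
  have hXz : (1-β) * (LT - L2 - LP/2) = 0 := le_antisymm hXle hXge
  have hX0 : LT - L2 - LP/2 = 0 := by
    rcases mul_eq_zero.mp hXz with h | h
    · exfalso; linarith
    · exact h
  have hTeq : a + c = 2 * Real.sqrt (a*c) := by
    have h1 : LT = Real.log (2 * Real.sqrt (a*c)) := by
      rw [Real.log_mul (by norm_num) (by positivity), Real.log_sqrt hPpos.le]
      rw [← hL2, ← hLP]
      linarith
    have h3 := Real.exp_log hT
    rw [← hLT, h1, Real.exp_log (by positivity)] at h3
    linarith
  have hsq : (a+c)^2 = 4*(a*c) := by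
    rw [hTeq, mul_pow, Real.sq_sqrt hPpos.le]
    ring
  have h0 : (a-c)^2 = 0 := by linear_combination hsq
  have h1 : a - c = 0 := pow_eq_zero_iff two_ne_zero |>.mp h0
  linarith

lemma two_point_integral {Ω : Type*} [MeasurableSpace Ω] (μ : Measure Ω)
    [IsProbabilityMeasure μ] (X : Ω → ℝ) (h1 : Integrable X μ) (a b : ℝ) (hab : a ≠ b)
    (ha0 : μ {ω | X ω = a} ≠ 0) (hb0 : μ {ω | X ω = b} ≠ 0)
    (hae : ∀ᵐ ω ∂μ, X ω = a ∨ X ω = b) :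
    ∃ p q : ℝ, 0 < p ∧ 0 < q ∧ p + q = 1 ∧
      ∀ g : ℝ → ℝ, ∫ ω, g (X ω) ∂μ = p * g a + q * g b := by
  have hX := h1.aestronglyMeasurable
  set Y := hX.mk X with hY
  have hXY : X =ᵐ[μ] Y := hX.ae_eq_mk
  have hYm : Measurable Y := hX.stronglyMeasurable_mk.measurable
  set A : Set Ω := Y ⁻¹' {a} with hA
  set B : Set Ω := Y ⁻¹' {b} with hB
  have hAm : MeasurableSet A := hYm (measurableSet_singleton a)
  have hBm : MeasurableSet B := hYm (measurableSet_singleton b)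
  have haeY : ∀ᵐ ω ∂μ, Y ω = a ∨ Y ω = b := by
    filter_upwards [hXY, hae] with ω h h'
    rw [← h]; exact h'
  have hAeq : μ {ω | X ω = a} = μ A := by
    apply measure_congr
    filter_upwards [hXY] with ω h
    change (X ω = a) = (Y ω = a)
    rw [h]
  have hBeq : μ {ω | X ω = b} = μ B := by
    apply measure_congr
    filter_upwards [hXY] with ω h
    change (X ω = b) = (Y ω = b)
    rw [h]
  have hdisj : Disjoint A B := by
    rw [Set.disjoint_left]
    intro ω hωA hωB
    simp only [hA, hB, Set.mem_preimage, Set.mem_singleton_iff] at hωA hωB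
    exact hab (hωA ▸ hωB ▸ rfl)
  have hunion : μ (A ∪ B) = 1 := by
    have hcns : μ (A ∪ B)ᶜ = 0 := by
      have hset : (A ∪ B)ᶜ = {ω | ¬(Y ω = a ∨ Y ω = b)} := by
        ext ω
        simp [hA, hB]
      rw [hset]
      exact ae_iff.mp haeY
    have h1 := measure_add_measure_compl (μ := μ) (hAm.union hBm)
    rw [hcns, add_zero, measure_univ] at h1
    exact h1
  refine ⟨(μ A).toReal, (μ B).toReal, ?_, ?_, ?_, ?_⟩
  · exact ENNReal.toReal_pos (hAeq ▸ ha0) (measure_ne_top μ A)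
  · exact ENNReal.toReal_pos (hBeq ▸ hb0) (measure_ne_top μ B)
  · rw [← ENNReal.toReal_add (measure_ne_top μ A) (measure_ne_top μ B),
      ← measure_union hdisj hBm, hunion, ENNReal.toReal_one]
  · intro g
    have hcong : (fun ω => g (X ω)) =ᵐ[μ]
        fun ω => A.indicator (fun _ => g a) ω + B.indicator (fun _ => g b) ω := by
      filter_upwards [hXY, haeY] with ω h h'
      rcases h' with h' | h'
      · have hωA : ω ∈ A := by simp [hA, h']
        have hωB : ω ∉ B := by simp [hB, h', hab]
        simp [Set.indicator_of_mem hωA, Set.indicator_of_notMem hωB, h, h']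
      · have hωB : ω ∈ B := by simp [hB, h']
        have hωA : ω ∉ A := by simp [hA, h', Ne.symm hab]
        simp [Set.indicator_of_mem hωB, Set.indicator_of_notMem hωA, h, h']
    rw [integral_congr_ae hcong, integral_add
      ((integrable_const (g a)).indicator hAm) ((integrable_const (g b)).indicator hBm),
      integral_indicator_const (g a) hAm, integral_indicator_const (g b) hBm,
      smul_eq_mul, smul_eq_mul, measureReal_def, measureReal_def]

theorem symmetric_bernoulli_of_equality {Ω : Type*} [MeasurableSpace Ω] (μ : Measure Ω)
    [IsProbabilityMeasure μ] (X : Ω → ℝ) (β : ℝ) (hβ : β ∈ Set.Ico (0:ℝ) 1)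
    (h1 : Integrable X μ) (h2 : Integrable (fun ω => X ω ^ 2) μ)
    (h3 : Integrable (fun ω => X ω ^ 3) μ) (h4 : Integrable (fun ω => X ω ^ 4) μ)
    (hβint : Integrable (fun ω => |X ω| ^ β) μ)
    (hmean : ∫ ω, X ω ∂μ = 0) (hvar : 0 < ∫ ω, X ω ^ 2 ∂μ)
    (hbern : ∃ a b : ℝ, a ≠ b ∧ μ {ω | X ω = a} ≠ 0 ∧ μ {ω | X ω = b} ≠ 0 ∧
      ∀ᵐ ω ∂μ, X ω = a ∨ X ω = b)
    (heq : (∫ ω, X ω ^ 4 ∂μ) / (∫ ω, X ω ^ 2 ∂μ) ^ 2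
      - (3 / 4) * (∫ ω, X ω ^ 3 ∂μ) ^ 2 / (∫ ω, X ω ^ 2 ∂μ) ^ 3
      = (∫ ω, X ω ^ 2 ∂μ) ^ (β / (2 - β)) / (∫ ω, |X ω| ^ β ∂μ) ^ (2 / (2 - β))) :
    ∫ ω, X ω ^ 3 ∂μ = 0 := by
  obtain ⟨a, b, hab, ha0, hb0, hae⟩ := hbern
  obtain ⟨p, q, hp, hq, hpq, hint⟩ := two_point_integral μ X h1 a b hab ha0 hb0 hae
  have hi1 : ∫ ω, X ω ∂μ = p * a + q * b := by simpa using hint (fun t => t)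
  have hi2 : ∫ ω, X ω ^ 2 ∂μ = p * a ^ 2 + q * b ^ 2 := by simpa using hint (fun t => t ^ 2)
  have hi3 : ∫ ω, X ω ^ 3 ∂μ = p * a ^ 3 + q * b ^ 3 := by simpa using hint (fun t => t ^ 3)
  have hi4 : ∫ ω, X ω ^ 4 ∂μ = p * a ^ 4 + q * b ^ 4 := by simpa using hint (fun t => t ^ 4)
  have hiβ : ∫ ω, |X ω| ^ β ∂μ = p * |a| ^ β + q * |b| ^ β := by
    simpa using hint (fun t => |t| ^ β)
  rw [hi1] at hmean
  rw [hi2, hi3, hi4, hiβ] at heq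
  rw [hi3]
  rcases lt_trichotomy a 0 with hA | hA | hA
  · -- a < 0, so b > 0
    have hbpos : 0 < b := by
      rcases lt_trichotomy b 0 with hB | hB | hB
      · nlinarith
      · exfalso; nlinarith
      · exact hB
    have hdpos : (0:ℝ) < -a := by linarith
    have hm : q * b = p * (-a) := by nlinarith
    have e2 : p * a ^ 2 + q * b ^ 2 = q * b ^ 2 + p * (-a) ^ 2 := by ring
    have e3 : p * a ^ 3 + q * b ^ 3 = q * b ^ 3 - p * (-a) ^ 3 := by ring
    have e4 : p * a ^ 4 + q * b ^ 4 = q * b ^ 4 + p * (-a) ^ 4 := by ring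
    have eβ : p * |a| ^ β + q * |b| ^ β = q * b ^ β + p * (-a) ^ β := by
      rw [abs_of_neg hA, abs_of_pos hbpos]; ring
    rw [e2, e3, e4, eβ] at heq
    have hbd : b = -a := key_lemma β b (-a) q p hβ.1 hβ.2 hbpos hdpos hq hp
      (by linarith) hm heq
    linear_combination b^2 * hm + p*(-a)*(b + -a) * hbd
  · exfalso
    subst hA
    have hb : b = 0 := by
      have : q * b = 0 := by linarith
      rcases mul_eq_zero.mp this with h | h
      · exact absurd h (ne_of_gt hq)
      · exact h
    exact hab (hb ▸ rfl)
  · -- a > 0, so b < 0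
    have hbneg : b < 0 := by
      rcases lt_trichotomy b 0 with hB | hB | hB
      · exact hB
      · exfalso; nlinarith
      · nlinarith
    have hcpos : (0:ℝ) < -b := by linarith
    have hm : p * a = q * (-b) := by nlinarith
    have e2 : p * a ^ 2 + q * b ^ 2 = p * a ^ 2 + q * (-b) ^ 2 := by ring
    have e3 : p * a ^ 3 + q * b ^ 3 = p * a ^ 3 - q * (-b) ^ 3 := by ring
    have e4 : p * a ^ 4 + q * b ^ 4 = p * a ^ 4 + q * (-b) ^ 4 := by ring
    have eβ : p * |a| ^ β + q * |b| ^ β = p * a ^ β + q * (-b) ^ β := by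
      rw [abs_of_pos hA, abs_of_neg hbneg]
    rw [e2, e3, e4, eβ] at heq
    have hac : a = -b := key_lemma β a (-b) p q hβ.1 hβ.2 hA hcpos hp hq hpq hm heq
    linear_combination a^2 * hm + q*(-b)*(a + -b) * hac
end
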